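/- In the free simplicial resolution of the category [n], the simplicial hom-set from i to j is given by F_•[n](i,j) ≅ Δ[1]^{j−i−1} (the (j−i−1)-fold product of the standard simplicial 1-simplex) when i < j, a point when i = j, and empty when i > j. -/

import Mathlib

open CategoryTheory

universe u

/- The standard (Cordier/Dwyer–Kan) free resolution `F_•C` of a category `C`, where
`F_nC = F^{n+1}C` and `FC` is the category whose morphisms are words of composable
non-identity morphisms of `C`, composed by concatenation. -/

/-- Words (paths) of composable non-identity morphisms of a category. -/
inductive NIP {C : Type u} [Category.{u} C] : C → C → Type u
  | nil (a : C) : NIP a a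
  | cons {a b c : C} (p : NIP a b) (f : b ⟶ c)
      (hf : ¬∃ h : b = c, f = eqToHom h) : NIP a c

/-- Concatenation of words. -/
def NIP.comp {C : Type u} [Category.{u} C] :
    {a b c : C} → NIP a b → NIP b c → NIP a c
  | _, _, _, p, .nil _ => p
  | _, _, _, p, .cons q f hf => .cons (p.comp q) f hf

/-- The free category `FC` on a category `C`: same objects, morphisms the words of
composable non-identity morphisms of `C`, composed by concatenation (with the
empty word as identity). -/
@[reducible] def FreeNI (C : Type u) [Category.{u} C] : Type u := C

instance FreeNI.categoryStruct (C : Type u) [Category.{u} C] :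
    CategoryStruct.{u} (FreeNI C) where
  Hom a b := NIP (C := C) a b
  id a := NIP.nil a
  comp := fun {a b c} p q => NIP.comp (C := C) p q

theorem NIP.comp_nil {C : Type u} [Category.{u} C] {a b : C} (p : NIP a b) :
    NIP.comp p (.nil b) = p := by simp [NIP.comp]

theorem NIP.nil_comp {C : Type u} [Category.{u} C] {a b : C} (p : NIP a b) :
    NIP.comp (.nil a) p = p := by
  induction p with
  | nil => simp [NIP.comp]
  | cons q f hf ih => simp [NIP.comp, ih]

theorem NIP.comp_assoc {C : Type u} [Category.{u} C] {a b c d : C}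
    (p : NIP a b) (q : NIP b c) (r : NIP c d) :
      NIP.comp (NIP.comp p q) r = NIP.comp p (NIP.comp q r) := by
  induction r with
  | nil => simp [NIP.comp]
  | cons r' f hf ih => simp [NIP.comp, ih]

instance FreeNI.category (C : Type u) [Category.{u} C] : Category.{u} (FreeNI C) where
  id_comp := fun {a b} p => NIP.nil_comp p
  comp_id := fun {a b} p => NIP.comp_nil p
  assoc := fun {a b c d} p q r => NIP.comp_assoc p q r

/-- The category structure of the iterated free category `F^kC` (the objects of
`F^kC` are the objects of `C`). -/
def iterFreeCat (C : Type u) : ℕ → Category.{u} C → Category.{u} C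
  | 0, inst => inst
  | k + 1, inst => (@FreeNI.category C (iterFreeCat C k inst) : Category.{u} C)

/-- The morphisms from `i` to `j` in `F^{m+1}[n]`, i.e. the `m`-simplices of the
simplicial hom-set `F_•[n](i,j)` of the free simplicial resolution of the poset
category `[n] = {0 < 1 < ⋯ < n}`. -/
def resolutionHom (n m : ℕ) (i j : Fin (n + 1)) : Type :=
  @Quiver.Hom (Fin (n + 1))
    (@CategoryStruct.toQuiver _ (@Category.toCategoryStruct _
      (iterFreeCat (Fin (n + 1)) (m + 1) inferInstance))) i j


namespace FreeResAux

theorem card_filter_val_lt (N c : ℕ) (h : c ≤ N) :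
    (Finset.univ.filter (fun q : Fin N => (q : ℕ) < c)).card = c := by
  rw [← Fintype.card_subtype]
  have e : {q : Fin N // (q : ℕ) < c} ≃ Fin c :=
    { toFun := fun q => ⟨(q.1 : ℕ), q.2⟩
      invFun := fun x => ⟨⟨(x : ℕ), lt_of_lt_of_le x.2 h⟩, x.2⟩
      left_inv := fun q => by ext; rfl
      right_inv := fun x => by ext; rfl }
  rw [Fintype.card_congr e, Fintype.card_fin]

def ohEquiv (m : ℕ) : (Fin (m+1) →o Fin 2) ≃ Fin (m+2) where
  toFun f := ⟨(Finset.univ.filter (fun q => f q = 0)).card, by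
    have h := Finset.card_filter_le (Finset.univ : Finset (Fin (m+1))) (fun q => f q = 0)
    simp only [Finset.card_univ, Fintype.card_fin] at h
    omega⟩
  invFun t := ⟨fun q => if (q : ℕ) < (t : ℕ) then 0 else 1, by
    intro p q hpq
    have hpq' : (p : ℕ) ≤ (q : ℕ) := hpq
    dsimp only
    split_ifs with h1 h2 <;>
      first | exact le_refl _ | exact Fin.zero_le _ | omega⟩
  left_inv f := by
    have mono0 : ∀ p q : Fin (m+1), p ≤ q → f q = 0 → f p = 0 := by
      intro p q h h0
      exact Fin.le_zero_iff.mp (h0 ▸ f.mono h)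
    ext q
    simp only [OrderHom.coe_mk]
    set c := (Finset.univ.filter (fun q => f q = 0)).card with hc
    change ((if (q : ℕ) < c then (0 : Fin 2) else 1 : Fin 2) : ℕ) = _
    by_cases hq : f q = 0
    · rw [if_pos, hq]
      have hsub : Finset.univ.filter (fun p : Fin (m+1) => (p : ℕ) < (q : ℕ) + 1) ⊆
          Finset.univ.filter (fun p => f p = 0) := by
        intro p hp
        simp only [Finset.mem_filter, Finset.mem_univ, true_and] at hp ⊢
        exact mono0 p q (by omega) hq
      have := Finset.card_le_card hsub
      rw [card_filter_val_lt (m+1) ((q:ℕ)+1) (by omega)] at this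
      omega
    · have hv : (f q).val = 1 := by
        have h2 := (f q).isLt
        have hne : (f q).val ≠ 0 := fun h => hq (Fin.ext h)
        omega
      have hq1 : f q = 1 := Fin.ext (by rw [hv]; rfl)
      rw [if_neg, hq1]
      have hsub : Finset.univ.filter (fun p : Fin (m+1) => f p = 0) ⊆
          Finset.univ.filter (fun p : Fin (m+1) => (p : ℕ) < (q : ℕ)) := by
        intro p hp
        simp only [Finset.mem_filter, Finset.mem_univ, true_and] at hp ⊢
        by_contra hle
        exact hq (mono0 q p (by omega) hp)
      have := Finset.card_le_card hsub
      rw [card_filter_val_lt (m+1) (q : ℕ) (by omega)] at this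
      omega
  right_inv t := by
    ext
    simp only [OrderHom.coe_mk]
    have hiff : ∀ q ∈ (Finset.univ : Finset (Fin (m+1))),
        ((if (q : ℕ) < (t : ℕ) then (0 : Fin 2) else 1) = 0) ↔ ((q : ℕ) < (t : ℕ)) := by
      intro q _
      split_ifs with h
      · simp [h]
      · simp only [h, iff_false]
        exact one_ne_zero
    change (Finset.univ.filter (fun q : Fin (m+1) =>
      (if (q : ℕ) < (t : ℕ) then (0 : Fin 2) else 1) = 0)).card = t
    rw [Finset.filter_congr hiff, card_filter_val_lt (m+1) (t : ℕ) (by omega)]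

theorem tele (M N : ℕ) : M^N + ∑ t ∈ Finset.range N, (M+1)^t * M^(N-1-t) = (M+1)^N := by
  induction N with
  | zero => simp
  | succ N ih =>
    rw [Finset.sum_range_succ]
    have h1 : ∀ t ∈ Finset.range N, (M+1)^t * M^(N+1-1-t) = M * ((M+1)^t * M^(N-1-t)) := by
      intro t ht
      rw [Finset.mem_range] at ht
      have h : N + 1 - 1 - t = (N - 1 - t) + 1 := by omega
      rw [h, pow_succ]; ring
    rw [Finset.sum_congr rfl h1, ← Finset.mul_sum]
    have h0 : N + 1 - 1 - N = 0 := by omega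
    rw [h0, pow_zero, mul_one]
    calc M^(N+1) + (M * ∑ t ∈ Finset.range N, (M+1)^t * M^(N-1-t) + (M+1)^N)
        = M * (M^N + ∑ t ∈ Finset.range N, (M+1)^t * M^(N-1-t)) + (M+1)^N := by ring
      _ = M * (M+1)^N + (M+1)^N := by rw [ih]
      _ = (M+1)^(N+1) := by ring

theorem natKey (M A B R : ℕ) (hAB : A < B) (hB : B ≤ R) :
    ∑ x ∈ Finset.range R,
      ((if A = x then 1 else if A < x then (M+1)^(x-A-1) else 0) *
        (if x < B then M^(B-x-1) else 0)) = (M+1)^(B-A-1) := by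
  set f : ℕ → ℕ := fun x =>
    (if A = x then 1 else if A < x then (M+1)^(x-A-1) else 0) *
      (if x < B then M^(B-x-1) else 0) with hf
  have hsub : Finset.Ico A B ⊆ Finset.range R := by
    intro x hx; rw [Finset.mem_Ico] at hx; rw [Finset.mem_range]; omega
  have hz : ∀ x ∈ Finset.range R, x ∉ Finset.Ico A B → f x = 0 := by
    intro x _ hx
    rw [Finset.mem_Ico] at hx
    simp only [hf]
    rcases Nat.lt_or_ge x B with h | h
    · have hxA : x < A := by omega
      rw [if_neg (by omega), if_neg (by omega), zero_mul]
    · rw [if_neg (show ¬ x < B by omega), mul_zero]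
  rw [← Finset.sum_subset hsub hz, Finset.sum_Ico_eq_sum_range]
  set N := B - A - 1 with hN
  have hBA : B - A = N + 1 := by omega
  rw [hBA, Finset.sum_range_succ']
  have hfirst : f (A + 0) = M ^ N := by
    simp only [hf, Nat.add_zero]
    rw [if_pos trivial, if_pos hAB, one_mul]
  have hrest : ∀ t ∈ Finset.range N, f (A + (t + 1)) = (M+1)^t * M^(N-1-t) := by
    intro t ht
    rw [Finset.mem_range] at ht
    simp only [hf]
    rw [if_neg (by omega), if_pos (by omega), if_pos (by omega)]
    congr 2 <;> omega
  rw [Finset.sum_congr rfl hrest, hfirst, Nat.add_comm, tele]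

/-- The hom-type of an explicitly given category structure on `Fin (n+1)`. -/
abbrev Hm {n : ℕ} (cat : Category.{0} (Fin (n+1))) (a b : Fin (n+1)) : Type :=
  @Quiver.Hom (Fin (n+1))
    (@CategoryStruct.toQuiver _ (@Category.toCategoryStruct _ cat)) a b

section Facts
variable {n M : ℕ} (cat : Category.{0} (Fin (n+1)))

theorem nip_le (hempt : ∀ a b : Fin (n+1), b < a → IsEmpty (Hm cat a b)) :
    ∀ {a b : Fin (n+1)}, @NIP (Fin (n+1)) cat a b → a ≤ b := by
  intro a b p
  induction p with
  | nil => exact le_refl _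
  | @cons y z p f hf ih =>
      exact ih.trans (le_of_not_gt (fun h => ((hempt y z h).false f).elim))

theorem letter_lt (hempt : ∀ a b : Fin (n+1), b < a → IsEmpty (Hm cat a b))
    (huniq : ∀ (a : Fin (n+1)) (f : Hm cat a a),
      f = @CategoryStruct.id _ (@Category.toCategoryStruct _ cat) a)
    {b c : Fin (n+1)} (f : Hm cat b c)
    (hf : ¬∃ h : b = c, f = @eqToHom _ (@Category.toCategoryStruct _ cat) b c h) : b < c := by
  rcases lt_trichotomy b c with h | h | h
  · exact h
  · subst h
    exact absurd ⟨rfl, by rw [huniq b f]; rfl⟩ hf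
  · exact ((hempt b c h).false f).elim

theorem nip_nil (hempt : ∀ a b : Fin (n+1), b < a → IsEmpty (Hm cat a b))
    (huniq : ∀ (a : Fin (n+1)) (f : Hm cat a a),
      f = @CategoryStruct.id _ (@Category.toCategoryStruct _ cat) a)
    {a : Fin (n+1)} (p : @NIP (Fin (n+1)) cat a a) : p = NIP.nil a := by
  cases p with
  | nil => rfl
  | @cons y z q f hf =>
      have h1 : a ≤ y := nip_le cat hempt q
      have h2 : y < a := letter_lt cat hempt huniq f hf
      exact absurd (lt_of_le_of_lt h1 h2) (lt_irrefl a)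

def nipDecomp (a b : Fin (n+1)) :
    @NIP (Fin (n+1)) cat a b ≃
      (PLift (a = b)) ⊕
        (Σ c : Fin (n+1), @NIP (Fin (n+1)) cat a c ×
          {f : Hm cat c b // ¬∃ h : c = b, f = @eqToHom _ (@Category.toCategoryStruct _ cat) c b h}) where
  toFun p := match p with
    | .nil _ => Sum.inl ⟨rfl⟩
    | .cons q f hf => Sum.inr ⟨_, q, f, hf⟩
  invFun x := match x with
    | Sum.inl ⟨h⟩ => h ▸ NIP.nil a
    | Sum.inr ⟨_, q, f, hf⟩ => NIP.cons q f hf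
  left_inv p := by cases p <;> rfl
  right_inv x := by
    rcases x with ⟨⟨rfl⟩⟩ | ⟨c, q, f, hf⟩ <;> rfl

end Facts

/-- Interval weight -/
def Wt {n : ℕ} (M : ℕ) (a b : Fin (n+1)) : ℕ :=
  if a = b then 1 else if a < b then M ^ ((b:ℕ) - (a:ℕ) - 1) else 0

section Arith
variable {n M : ℕ}

theorem wt_nat (M' : ℕ) (x y : Fin (n+1)) :
    Wt (n := n) M' x y =
      (if (x:ℕ) = (y:ℕ) then 1 else if (x:ℕ) < (y:ℕ) then M'^((y:ℕ)-(x:ℕ)-1) else 0) := by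
  unfold Wt
  by_cases h1 : x = y
  · rw [if_pos h1, if_pos (by rw [h1])]
  · rw [if_neg h1, if_neg (fun hc => h1 (Fin.ext hc))]
    by_cases h2 : x < y
    · rw [if_pos h2, if_pos (Fin.lt_def.mp h2)]
    · rw [if_neg h2, if_neg (fun hc => h2 (Fin.lt_def.mpr hc))]

theorem keyEq (a b : Fin (n+1)) :
    (if a = b then 1 else 0) +
      ∑ c : Fin (n+1), Wt (n := n) (M+1) a c * (if c < b then M^((b:ℕ)-(c:ℕ)-1) else 0)
      = Wt (n := n) (M+1) a b := by
  set G : ℕ → ℕ := fun x =>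
    (if (a:ℕ) = x then 1 else if (a:ℕ) < x then (M+1)^(x-(a:ℕ)-1) else 0) *
      (if x < (b:ℕ) then M^((b:ℕ)-x-1) else 0) with hG
  have hterm : ∀ c : Fin (n+1),
      Wt (n := n) (M+1) a c * (if c < b then M^((b:ℕ)-(c:ℕ)-1) else 0) = G (c : ℕ) := by
    intro c
    rw [wt_nat]
    simp only [hG, Fin.lt_def]
  have hsum : ∑ c : Fin (n+1), Wt (n := n) (M+1) a c * (if c < b then M^((b:ℕ)-(c:ℕ)-1) else 0)
      = ∑ x ∈ Finset.range (n+1), G x := by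
    rw [← Fin.sum_univ_eq_sum_range G (n+1)]
    exact Finset.sum_congr rfl (fun c _ => hterm c)
  rw [hsum]
  rcases lt_trichotomy a b with h | h | h
  · rw [if_neg (Fin.ne_of_lt h), Nat.zero_add]
    simp only [hG]
    rw [natKey M (a:ℕ) (b:ℕ) (n+1) (Fin.lt_def.mp h) (by omega), wt_nat,
      if_neg (by have := Fin.lt_def.mp h; omega), if_pos (Fin.lt_def.mp h)]
  · subst h
    rw [if_pos rfl]
    have hz : ∀ x ∈ Finset.range (n+1), G x = 0 := by
      intro x _
      simp only [hG]
      by_cases hx : x < (a:ℕ)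
      · rw [if_neg (by omega), if_neg (by omega), zero_mul]
      · rw [if_neg hx, mul_zero]
    rw [Finset.sum_eq_zero hz, wt_nat, if_pos rfl]
    omega
  · rw [if_neg (Fin.ne_of_gt h), Nat.zero_add, wt_nat,
      if_neg (by have := Fin.lt_def.mp h; omega), if_neg (by have := Fin.lt_def.mp h; omega)]
    apply Finset.sum_eq_zero
    intro x _
    have hb := Fin.lt_def.mp h
    simp only [hG]
    by_cases hx : x < (b:ℕ)
    · rw [if_neg (by omega), if_neg (by omega), zero_mul]
    · rw [if_neg hx, mul_zero]

def pliftEquiv (a b : Fin (n+1)) : PLift (a = b) ≃ Fin (if a = b then 1 else 0) := by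
  by_cases h : a = b
  · rw [if_pos h]
    exact ⟨fun _ => 0, fun _ => ⟨h⟩, fun x => rfl, fun x => Fin.ext (by omega)⟩
  · rw [if_neg h]
    haveI : IsEmpty (PLift (a = b)) := ⟨fun x => h x.down⟩
    exact Equiv.equivOfIsEmpty _ _

noncomputable def sigFin (w : Fin (n+1) → ℕ) :
    (Σ c : Fin (n+1), Fin (w c)) ≃ Fin (∑ c, w c) :=
  Fintype.equivFinOfCardEq (α := Σ c : Fin (n+1), Fin (w c))
    (by rw [Fintype.card_sigma]; simp)

end Arith

section Main
variable {n M : ℕ} (cat : Category.{0} (Fin (n+1)))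

def letterEquivPos (hequiv : ∀ a b : Fin (n+1), a < b →
      (Hm cat a b ≃ (Fin ((b:ℕ) - (a:ℕ) - 1) → Fin M)))
    {c b : Fin (n+1)} (h : c < b) :
    {f : Hm cat c b // ¬∃ h : c = b, f = @eqToHom _ (@Category.toCategoryStruct _ cat) c b h} ≃ Fin (M ^ ((b:ℕ)-(c:ℕ)-1)) :=
  (Equiv.subtypeUnivEquiv (fun f => fun he => absurd he.1 h.ne)).trans
    ((hequiv c b h).trans finFunctionFinEquiv)

theorem letterEmpty (hempt : ∀ a b : Fin (n+1), b < a → IsEmpty (Hm cat a b))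
    (huniq : ∀ (a : Fin (n+1)) (f : Hm cat a a),
      f = @CategoryStruct.id _ (@Category.toCategoryStruct _ cat) a)
    {c b : Fin (n+1)} (h : ¬ c < b) :
    IsEmpty {f : Hm cat c b // ¬∃ h : c = b, f = @eqToHom _ (@Category.toCategoryStruct _ cat) c b h} := by
  constructor
  rintro ⟨f, hf⟩
  exact absurd (letter_lt cat hempt huniq f hf) h

noncomputable def En
    (hempt : ∀ a b : Fin (n+1), b < a → IsEmpty (Hm cat a b))
    (huniq : ∀ (a : Fin (n+1)) (f : Hm cat a a),
      f = @CategoryStruct.id _ (@Category.toCategoryStruct _ cat) a)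
    (hequiv : ∀ a b : Fin (n+1), a < b →
      (Hm cat a b ≃ (Fin ((b:ℕ) - (a:ℕ) - 1) → Fin M))) :
    (b : Fin (n+1)) → (a : Fin (n+1)) →
      (@NIP (Fin (n+1)) cat a b ≃ Fin (Wt (n := n) (M+1) a b))
  | b, a =>
    (nipDecomp cat a b).trans <|
      (Equiv.sumCongr
        (pliftEquiv a b)
        ((Equiv.sigmaCongrRight (fun c =>
          (if h : c < b then
            ((En hempt huniq hequiv c a).prodCongr (letterEquivPos cat hequiv h)).trans
              (finProdFinEquiv.trans (finCongr (by rw [if_pos h])))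
          else
            haveI := letterEmpty cat hempt huniq h
            (Equiv.equivOfIsEmpty _ (Fin 0)).trans
              (finCongr (by rw [if_neg h, mul_zero]))
            : @NIP (Fin (n+1)) cat a c ×
              {f : Hm cat c b // ¬∃ h : c = b, f = @eqToHom _ (@Category.toCategoryStruct _ cat) c b h} ≃
              Fin (Wt (n := n) (M+1) a c * (if c < b then M ^ ((b:ℕ)-(c:ℕ)-1) else 0))))).trans
          (sigFin _))).trans <|
      finSumFinEquiv.trans (finCongr (keyEq a b))
termination_by b a => (b : ℕ)
decreasing_by exact h

end Main

structure Pack (n M : ℕ) (cat : Category.{0} (Fin (n+1))) : Type where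
  empt : ∀ a b : Fin (n+1), b < a → IsEmpty (Hm cat a b)
  uniq : ∀ (a : Fin (n+1)) (f : Hm cat a a),
    f = @CategoryStruct.id _ (@Category.toCategoryStruct _ cat) a
  equiv : ∀ a b : Fin (n+1), a < b →
    (Hm cat a b ≃ (Fin ((b:ℕ) - (a:ℕ) - 1) → Fin M))

noncomputable def pstep {n M : ℕ} {cat : Category.{0} (Fin (n+1))} (P : Pack n M cat) :
    Pack n (M+1) (@FreeNI.category (Fin (n+1)) cat) :=
  Pack.mk
    (fun _ b h => ⟨fun p => absurd (nip_le cat P.empt p) (not_le.mpr h)⟩)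
    (fun _ p => nip_nil cat P.empt P.uniq p)
    (fun a b h =>
      (En cat P.empt P.uniq P.equiv b a).trans
        ((finCongr (show Wt (n := n) (M+1) a b = (M+1) ^ ((b:ℕ)-(a:ℕ)-1) by
            rw [Wt, if_neg (Fin.ne_of_lt h), if_pos h])).trans
          finFunctionFinEquiv.symm))

def packBase (n : ℕ) : Pack n 1 (iterFreeCat (Fin (n+1)) 0 inferInstance) :=
  Pack.mk
    (fun a b h => ⟨fun f => absurd (leOfHom f) (not_le.mpr h)⟩)
    (fun a f => rfl)
    (fun a b h =>
      { toFun := fun _ _ => 0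
        invFun := fun _ => homOfLE h.le
        left_inv := fun f => rfl
        right_inv := fun g => funext fun q => Subsingleton.elim _ _ })

noncomputable def packIter (n : ℕ) :
    (k : ℕ) → Pack n (k+1) (iterFreeCat (Fin (n+1)) k inferInstance)
  | 0 => packBase n
  | k+1 => pstep (packIter n k)

end FreeResAux

open FreeResAux in
/-- In the free simplicial resolution `F_•[n]`, the simplicial hom-set from `i` to
`j` is `Δ[1]^{j-i-1}` when `i < j` (levelwise: the `m`-simplices of `F_•[n](i,j)`
biject with the `m`-simplices of `Δ[1]^{j-i-1}`, i.e. with `(j-i-1)`-tuples of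
monotone maps `[m] → [1]`), a point when `i = j`, and empty when `i > j`. -/
theorem freeResolution_hom_of_ordinal (n m : ℕ) (i j : Fin (n + 1)) :
    (i < j → Nonempty (resolutionHom n m i j ≃
      (Fin ((j : ℕ) - (i : ℕ) - 1) → (Fin (m + 1) →o Fin 2)))) ∧
    (i = j → Nonempty (resolutionHom n m i j ≃ PUnit)) ∧
    (j < i → IsEmpty (resolutionHom n m i j)) := by
  have P := packIter n (m+1)
  refine ⟨fun h => ⟨?_⟩, fun h => ⟨?_⟩, fun h => ?_⟩
  · exact (P.equiv i j h).trans (Equiv.arrowCongr (Equiv.refl _) (ohEquiv m).symm)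
  · subst h
    exact
      { toFun := fun _ => PUnit.unit
        invFun := fun _ =>
          @CategoryStruct.id _ (@Category.toCategoryStruct _
            (iterFreeCat (Fin (n+1)) (m+1) inferInstance)) i
        left_inv := fun f => (P.uniq i f).symm
        right_inv := fun _ => rfl }
  · exact ⟨fun f => (P.empt i j h).false f⟩
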